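/- For every k with 1 ≤ k ≤ n, the following identity (relation R_k) holds in F_q[x_1,…,x_n,y_1,…,y_n]: Σ_{i=0}^{k−1} Σ_{j=0}^{n−k} (−1)^{i+j+n+1} c_{k−1,i} · c*_{n−k,j} · u_{i−j}^{q^{min(i,j)}} = f_k · f*_{n+1−k}. -/

import Mathlib

open MvPolynomial

variable (F : Type) [Field F] [Fintype F] (n : ℕ)

/-- `fX F n k` is the orbit product `f_k` (1-indexed, meaningful for `1 ≤ k ≤ n`). -/
noncomputable def fX (k : ℕ) : MvPolynomial (Fin n ⊕ Fin n) F :=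
  if h : 1 ≤ k ∧ k ≤ n then
    ∏ α : Fin (k - 1) → F,
      (X (Sum.inl ⟨k - 1, by omega⟩) +
        ∑ j : Fin (k - 1), C (α j) * X (Sum.inl ⟨j.val, by omega⟩))
  else 0

/-- `fY F n k` is `f_k^*` (1-indexed), the orbit product of `y_{n+1-k}`. -/
noncomputable def fY (k : ℕ) : MvPolynomial (Fin n ⊕ Fin n) F :=
  if h : 1 ≤ k ∧ k ≤ n then
    ∏ α : Fin (k - 1) → F,
      (X (Sum.inr ⟨n - k, by omega⟩) +
        ∑ j : Fin (k - 1), C (α j) * X (Sum.inr ⟨n - 1 - j.val, by omega⟩))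
  else 0

/-- `uInv F n j` is the invariant `u_j`, for `j : ℤ`. -/
noncomputable def uInv (j : ℤ) : MvPolynomial (Fin n ⊕ Fin n) F :=
  if 0 ≤ j then ∑ k : Fin n, X (Sum.inl k) ^ (Fintype.card F) ^ j.toNat * X (Sum.inr k)
  else ∑ k : Fin n, X (Sum.inl k) * X (Sum.inr k) ^ (Fintype.card F) ^ (-j).toNat

/-- `cX F n s t` is the Dickson-type invariant `c_{s,t}` (in the `x`-variables):
the sum over strictly increasing sequences `1 ≤ j_1 < ⋯ < j_{s-t} ≤ s` (encoded as
strictly monotone functions `Fin (s-t) → Fin s`) of `∏_l f_{j_l}^{(q-1)·q^{t+l-j_l}}`. -/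
noncomputable def cX (s t : ℕ) : MvPolynomial (Fin n ⊕ Fin n) F :=
  if s ≤ n then
    ∑ g ∈ Finset.univ.filter (fun g : Fin (s - t) → Fin s => ∀ a b : Fin (s - t), a < b → g a < g b),
      ∏ l : Fin (s - t),
        fX F n ((g l).val + 1) ^ ((Fintype.card F - 1) * (Fintype.card F) ^ (t + l.val - (g l).val))
  else 0

/-- `cY F n s t` is `c_{s,t}^*` (in the `y`-variables). -/
noncomputable def cY (s t : ℕ) : MvPolynomial (Fin n ⊕ Fin n) F :=
  if s ≤ n then
    ∑ g ∈ Finset.univ.filter (fun g : Fin (s - t) → Fin s => ∀ a b : Fin (s - t), a < b → g a < g b),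
      ∏ l : Fin (s - t),
        fY F n ((g l).val + 1) ^ ((Fintype.card F - 1) * (Fintype.card F) ^ (t + l.val - (g l).val))
  else 0

namespace RkAux

variable {F : Type} [Field F] [Fintype F] {n : ℕ}

local notation "R" => MvPolynomial (Fin n ⊕ Fin n) F
local notation "q" => Fintype.card F

lemma master : ∃ p e : ℕ, Nat.Prime p ∧ 0 < e ∧ Fintype.card F = p ^ e ∧
    CharP (MvPolynomial (Fin n ⊕ Fin n) F) p := by
  haveI := ringChar.charP F
  obtain ⟨e, hp, hcard⟩ := FiniteField.card F (ringChar F)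
  exact ⟨ringChar F, e, hp, e.2, hcard, inferInstance⟩

lemma qpow_add (m : ℕ) (a b : R) : (a + b) ^ q ^ m = a ^ q ^ m + b ^ q ^ m := by
  obtain ⟨p, e, hp, he, hq, hc⟩ := master (F := F) (n := n)
  haveI := Fact.mk hp
  rw [hq, ← pow_mul]
  exact add_pow_char_pow a b p (e * m)

lemma qpow_sum (m : ℕ) {ι : Type*} (s : Finset ι) (f : ι → R) :
    (∑ i ∈ s, f i) ^ q ^ m = ∑ i ∈ s, f i ^ q ^ m := by
  classical
  induction s using Finset.induction_on with
  | empty => simp [zero_pow (pow_ne_zero m (Fintype.card_ne_zero))]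
  | insert _ _ h ih => rw [Finset.sum_insert h, Finset.sum_insert h, qpow_add, ih]

lemma qpow_neg_one (m : ℕ) : ((-1 : R)) ^ q ^ m = -1 := by
  have h := qpow_add (F := F) (n := n) m 1 (-1)
  simp only [add_neg_cancel, one_pow] at h
  have : (0:R) ^ q ^ m = 0 := zero_pow (pow_ne_zero m (Fintype.card_ne_zero))
  rw [this] at h
  linear_combination -h

lemma qpow_C (m : ℕ) (β : F) : (C β : R) ^ q ^ m = C β := by
  rw [← C_pow, FiniteField.pow_card_pow]


lemma prod_linear (z c : R) :
    ∏ β : F, (z + C β * c) = z ^ q - c ^ (q - 1) * z := by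
  have hq2 : 1 < q := Fintype.one_lt_card
  have key : (∏ β : F, (Polynomial.X + Polynomial.C (C β * c))) =
      Polynomial.X ^ q - Polynomial.C (c ^ (q - 1)) * Polynomial.X := by
    by_cases hc : c = 0
    · subst hc
      simp [zero_pow (show q - 1 ≠ 0 by omega), Finset.prod_const]
    · set L : Polynomial R := ∏ β : F, (Polynomial.X + Polynomial.C (C β * c)) with hL
      set Rr : Polynomial R := Polynomial.X ^ q - Polynomial.C (c ^ (q - 1)) * Polynomial.X with hR
      have hLmonic : L.Monic :=
        Polynomial.monic_prod_of_monic _ _ (fun β _ => Polynomial.monic_X_add_C _)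
      have hLdeg : L.natDegree = q := by
        rw [hL, Polynomial.natDegree_prod_of_monic _ _ (fun β _ => Polynomial.monic_X_add_C _)]
        simp only [Polynomial.natDegree_X_add_C, Finset.sum_const, smul_eq_mul, mul_one,
          Finset.card_univ]
      have hdegR : Rr.degree = (q : ℕ) := by
        rw [hR]
        rw [Polynomial.degree_sub_eq_left_of_degree_lt, Polynomial.degree_X_pow]
        rw [Polynomial.degree_X_pow]
        apply lt_of_le_of_lt (Polynomial.degree_mul_le _ _)
        apply lt_of_le_of_lt (add_le_add_left Polynomial.degree_C_le _)
        rw [zero_add, Polynomial.degree_X]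
        exact_mod_cast hq2
      have hRlead : Rr.leadingCoeff = 1 := by
        have hnd : Rr.natDegree = q := Polynomial.natDegree_eq_of_degree_eq_some hdegR
        have hx : (Polynomial.C (c ^ (q - 1)) * Polynomial.X).coeff q = 0 := by
          rw [Polynomial.coeff_C_mul, Polynomial.coeff_X, if_neg (by omega)]
          ring
        rw [Polynomial.leadingCoeff, hnd, hR, Polynomial.coeff_sub, hx, Polynomial.coeff_X_pow,
          if_pos rfl, sub_zero]
      have hdegL : L.degree = (q : ℕ) := by
        rw [Polynomial.degree_eq_natDegree hLmonic.ne_zero, hLdeg]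
      have hsub : L - Rr = 0 ∨ (L - Rr).degree < (q : ℕ) := by
        by_cases h0 : L - Rr = 0
        · exact Or.inl h0
        · right
          rw [← hdegL]
          exact Polynomial.degree_sub_lt (hdegL.trans hdegR.symm) hLmonic.ne_zero
            (by rw [hLmonic.leadingCoeff, hRlead])
      have hzero : L - Rr = 0 := by
        rcases hsub with h | h
        · exact h
        · apply Polynomial.eq_zero_of_natDegree_lt_card_of_eval_eq_zero _
            (f := fun β : F => C β * c)
          · intro a b hab
            have : (C a : R) = C b := by
              have := mul_right_cancel₀ (by simpa using hc) hab
              exact this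
            exact MvPolynomial.C_injective _ _ this
          · intro β₀
            rw [Polynomial.eval_sub]
            have h1 : Polynomial.eval (C β₀ * c) L = 0 := by
              rw [hL, Polynomial.eval_prod]
              apply Finset.prod_eq_zero (Finset.mem_univ (-β₀))
              rw [Polynomial.eval_add, Polynomial.eval_X, Polynomial.eval_C, map_neg]
              ring
            have h2 : Polynomial.eval (C β₀ * c) Rr = 0 := by
              rw [hR]
              simp only [Polynomial.eval_sub, Polynomial.eval_pow, Polynomial.eval_X,
                Polynomial.eval_mul, Polynomial.eval_C]
              rw [mul_pow, ← C_pow, FiniteField.pow_card]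
              have : c ^ (q - 1) * (C β₀ * c) = C β₀ * (c ^ (q - 1) * c) := by ring
              rw [this, ← pow_succ, show q - 1 + 1 = q by omega]
              exact sub_self _
            rw [h1, h2, sub_zero]
          · have : (L - Rr).natDegree < q := by
              by_cases h0 : L - Rr = 0
              · simp [h0]; omega
              · exact (Polynomial.natDegree_lt_iff_degree_lt h0).mpr h
            simpa using this
      have := sub_eq_zero.mp hzero
      exact this
  have := congrArg (Polynomial.eval z) key
  simpa only [Polynomial.eval_prod, Polynomial.eval_add, Polynomial.eval_X, Polynomial.eval_C,
    Polynomial.eval_sub, Polynomial.eval_pow, Polynomial.eval_mul] using this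



noncomputable def Piv (v : ℕ → MvPolynomial (Fin n ⊕ Fin n) F) (s : ℕ)
    (z : MvPolynomial (Fin n ⊕ Fin n) F) : MvPolynomial (Fin n ⊕ Fin n) F :=
  ∏ α : Fin s → F, (z + ∑ j : Fin s, C (α j) * v j)

noncomputable def cc (f : ℕ → MvPolynomial (Fin n ⊕ Fin n) F) (m s t : ℕ) :
    MvPolynomial (Fin n ⊕ Fin n) F :=
  ∑ g ∈ Finset.univ.filter (fun g : Fin m → Fin s => ∀ a b : Fin m, a < b → g a < g b),
    ∏ l : Fin m, f ((g l).val + 1) ^ ((q - 1) * q ^ (t + l.val - (g l).val))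

lemma cc_zero (f : ℕ → R) (s t : ℕ) : cc f 0 s t = 1 := by
  unfold cc
  rw [Finset.filter_true_of_mem (fun g _ => fun a => a.elim0)]
  simp

lemma mono_bound {m s : ℕ} {g : Fin m → Fin s} (hg : ∀ a b : Fin m, a < b → g a < g b)
    (l : Fin m) : (g l).val + m ≤ s + l.val := by
  have step : ∀ d (h : l.val + d < m), (g l).val + d ≤ (g ⟨l.val + d, h⟩).val := by
    intro d
    induction d with
    | zero => intro h; simp
    | succ d ih =>
        intro h
        have h' : l.val + d < m := by omega
        have h'' : l.val + d + 1 < m := by omega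
        have key := hg ⟨l.val + d, h'⟩ ⟨l.val + d + 1, h''⟩ (by simp [Fin.lt_def])
        have key2 := ih h'
        have heq : (⟨l.val + (d+1), h⟩ : Fin m) = ⟨l.val + d + 1, h''⟩ := by
          apply Fin.ext; simp only []; omega
        have hlink := congrArg (fun x => (g x).val) heq
        simp only [Fin.lt_def] at key
        try simp only [] at hlink
        omega
  have hm : 0 < m := l.pos
  have h1 : l.val + (m - 1 - l.val) < m := by omega
  have := step (m - 1 - l.val) h1
  have h2 := (g ⟨l.val + (m - 1 - l.val), h1⟩).isLt
  omega

lemma mono_empty {m : ℕ} (g : Fin (m+1) → Fin m) (hg : ∀ a b, a < b → g a < g b) : False := by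
  have hinj : Function.Injective g := by
    intro a b hab
    by_contra hne
    rcases lt_or_gt_of_ne hne with h | h
    · exact absurd hab (ne_of_lt (hg _ _ h))
    · exact absurd hab.symm (ne_of_lt (hg _ _ h))
  have := Fintype.card_le_of_injective g hinj
  simp at this

lemma snoc_mono {m s : ℕ} (g : Fin m → Fin s) (hg : ∀ a b : Fin m, a < b → g a < g b) :
    ∀ a b : Fin (m+1), a < b →
      (Fin.snoc (fun l => (g l).castSucc) (Fin.last s) : Fin (m+1) → Fin (s+1)) a
        < (Fin.snoc (fun l => (g l).castSucc) (Fin.last s) : Fin (m+1) → Fin (s+1)) b := by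
  intro a b hab
  rcases Fin.eq_castSucc_or_eq_last b with ⟨b', rfl⟩ | rfl
  · have ha : a.val < m := by
      have := hab; simp [Fin.lt_def] at this; omega
    have : a = (⟨a.val, ha⟩ : Fin m).castSucc := by ext; simp
    rw [this, Fin.snoc_castSucc, Fin.snoc_castSucc]
    have : (⟨a.val, ha⟩ : Fin m) < b' := by simp [Fin.lt_def] at hab ⊢; omega
    exact Fin.castSucc_lt_castSucc_iff.mpr (hg _ _ this)
  · have ha : a.val < m := by
      have := hab; simp [Fin.lt_def] at this; omega
    have : a = (⟨a.val, ha⟩ : Fin m).castSucc := by ext; simp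
    rw [this, Fin.snoc_castSucc, Fin.snoc_last]
    exact Fin.castSucc_lt_last _

lemma sum_mono_split {M : Type} [AddCommMonoid M] (m s : ℕ)
    (W : (Fin (m+1) → Fin (s+1)) → M) :
    ∑ g ∈ Finset.univ.filter
        (fun g : Fin (m+1) → Fin (s+1) => ∀ a b, a < b → g a < g b), W g
    = (∑ g ∈ Finset.univ.filter
          (fun g : Fin m → Fin s => ∀ a b, a < b → g a < g b),
        W (Fin.snoc (fun l => (g l).castSucc) (Fin.last s)))
    + ∑ g ∈ Finset.univ.filter
          (fun g : Fin (m+1) → Fin s => ∀ a b, a < b → g a < g b),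
        W (fun l => (g l).castSucc) := by
  classical
  rw [← Finset.sum_filter_add_sum_filter_not
    (Finset.univ.filter (fun g : Fin (m+1) → Fin (s+1) => ∀ a b, a < b → g a < g b))
    (fun g => g (Fin.last m) = Fin.last s) W]
  congr 1
  · apply Finset.sum_bij'
      (i := fun (g : Fin (m+1) → Fin (s+1)) hg (l : Fin m) =>
        (⟨(g l.castSucc).val, by
          simp only [Finset.mem_filter, Finset.mem_univ, true_and] at hg
          have h1 := hg.1 l.castSucc (Fin.last m) (Fin.castSucc_lt_last l)
          rw [hg.2] at h1
          exact Fin.lt_def.mp h1⟩ : Fin s))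
      (j := fun (g : Fin m → Fin s) hg =>
        Fin.snoc (fun l => (g l).castSucc) (Fin.last s))
    · -- hi
      intro g hg
      have hg' := hg
      simp only [Finset.mem_filter, Finset.mem_univ, true_and] at hg'
      simp only [Finset.mem_filter, Finset.mem_univ, true_and]
      intro a b hab
      rw [Fin.mk_lt_mk]
      exact Fin.lt_def.mp (hg'.1 a.castSucc b.castSucc (Fin.castSucc_lt_castSucc_iff.mpr hab))
    · -- left_inv : j (i g) = g
      intro g hg
      have hg' := hg
      simp only [Finset.mem_filter, Finset.mem_univ, true_and] at hg'
      funext l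
      rcases Fin.eq_castSucc_or_eq_last l with ⟨l', rfl⟩ | rfl
      · rw [Fin.snoc_castSucc]
        apply Fin.ext
        rfl
      · rw [Fin.snoc_last]
        exact hg'.2.symm
    · -- right_inv : i (j g) = g
      intro g hg
      funext l
      apply Fin.ext
      simp only [Fin.snoc_castSucc, Fin.coe_castSucc]
    · -- h : W g = W (j (i g))
      intro g hg
      have hg' := hg
      simp only [Finset.mem_filter, Finset.mem_univ, true_and] at hg'
      congr 1
      funext l
      rcases Fin.eq_castSucc_or_eq_last l with ⟨l', rfl⟩ | rfl
      · rw [Fin.snoc_castSucc]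
        apply Fin.ext
        rfl
      · rw [Fin.snoc_last]
        exact hg'.2
    · -- hj
      intro g hg
      have hg' := hg
      simp only [Finset.mem_filter, Finset.mem_univ, true_and] at hg'
      rw [Finset.mem_filter, Finset.mem_filter]
      exact ⟨⟨Finset.mem_univ _, snoc_mono g hg'⟩, Fin.snoc_last _ _⟩
  · apply Finset.sum_bij'
      (i := fun (g : Fin (m+1) → Fin (s+1)) hg (l : Fin (m+1)) =>
        (⟨(g l).val, by
          simp only [Finset.mem_filter, Finset.mem_univ, true_and] at hg
          have hlast : (g (Fin.last m)).val < s := by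
            have h2 := hg.2
            rcases Fin.eq_castSucc_or_eq_last (g (Fin.last m)) with ⟨w, hw⟩ | hw
            · rw [hw]; exact w.isLt
            · exact absurd hw h2
          rcases eq_or_lt_of_le (Fin.le_last l) with hl | hl
          · rw [hl]; exact hlast
          · have := hg.1 l (Fin.last m) hl
            simp only [Fin.lt_def] at this
            omega⟩ : Fin s))
      (j := fun (g : Fin (m+1) → Fin s) hg (l : Fin (m+1)) => (g l).castSucc)
    · -- hi
      intro g hg
      have hg' := hg
      simp only [Finset.mem_filter, Finset.mem_univ, true_and] at hg'
      simp only [Finset.mem_filter, Finset.mem_univ, true_and]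
      intro a b hab
      rw [Fin.mk_lt_mk]
      exact Fin.lt_def.mp (hg'.1 a b hab)
    · -- left_inv
      intro g hg
      funext l
      apply Fin.ext
      rfl
    · -- right_inv
      intro g hg
      funext l
      apply Fin.ext
      rfl
    · -- h
      intro g hg
      congr 1
    · -- hj
      intro g hg
      have hg' := hg
      simp only [Finset.mem_filter, Finset.mem_univ, true_and] at hg'
      rw [Finset.mem_filter, Finset.mem_filter]
      refine ⟨⟨Finset.mem_univ _, fun a b hab => Fin.castSucc_lt_castSucc_iff.mpr (hg' a b hab)⟩, ?_⟩
      intro hcon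
      have := congrArg Fin.val hcon
      simp only [Fin.coe_castSucc, Fin.val_last] at this
      have := (g (Fin.last m)).isLt
      omega

lemma cc_succ_zero (f : ℕ → MvPolynomial (Fin n ⊕ Fin n) F) (m : ℕ) :
    cc f (m+1) (m+1) 0 = f (m+1) ^ (q - 1) * cc f m m 0 := by
  unfold cc
  rw [sum_mono_split m m
    (fun g => ∏ l : Fin (m+1), f ((g l).val + 1) ^ ((q - 1) * q ^ (0 + l.val - (g l).val)))]
  have h2 : Finset.univ.filter
      (fun g : Fin (m+1) → Fin m => ∀ a b, a < b → g a < g b) = ∅ :=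
    Finset.filter_false_of_mem (fun g _ hmono => mono_empty g hmono)
  rw [h2, Finset.sum_empty, add_zero, Finset.mul_sum]
  apply Finset.sum_congr rfl
  intro g hg
  rw [Fin.prod_univ_castSucc]
  simp only [Fin.snoc_castSucc, Fin.snoc_last, Fin.coe_castSucc, Fin.val_last]
  have h3 : 0 + m - m = 0 := by omega
  rw [h3, pow_zero, mul_one, mul_comm]

lemma cc_succ_succ (f : ℕ → MvPolynomial (Fin n ⊕ Fin n) F) (m t : ℕ) :
    cc f (m+1) (t+m+2) (t+1)
      = cc f (m+1) (t+m+1) t ^ q + f (t+m+2) ^ (q - 1) * cc f m (t+m+1) (t+1) := by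
  unfold cc
  have hsp := sum_mono_split m (t+m+1)
    (fun g : Fin (m+1) → Fin (t+m+2) =>
      ∏ l : Fin (m+1), f ((g l).val + 1) ^ ((q - 1) * q ^ ((t+1) + l.val - (g l).val)))
  rw [show t+m+2 = (t+m+1)+1 by omega] at *
  rw [hsp]
  have hpart1 : (∑ g ∈ Finset.univ.filter
        (fun g : Fin m → Fin (t+m+1) => ∀ a b, a < b → g a < g b),
      ∏ l : Fin (m+1),
        f (((Fin.snoc (fun l' => (g l').castSucc) (Fin.last (t+m+1))
              : Fin (m+1) → Fin (t+m+1+1)) l).val + 1)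
          ^ ((q - 1) * q ^ ((t+1) + l.val
              - ((Fin.snoc (fun l' => (g l').castSucc) (Fin.last (t+m+1))
                  : Fin (m+1) → Fin (t+m+1+1)) l).val)))
      = f (t+m+1+1) ^ (q - 1) * ∑ g ∈ Finset.univ.filter
        (fun g : Fin m → Fin (t+m+1) => ∀ a b, a < b → g a < g b),
      ∏ l : Fin m, f ((g l).val + 1) ^ ((q - 1) * q ^ ((t+1) + l.val - (g l).val)) := by
    rw [Finset.mul_sum]
    apply Finset.sum_congr rfl
    intro g hg
    rw [Fin.prod_univ_castSucc]
    simp only [Fin.snoc_castSucc, Fin.snoc_last, Fin.coe_castSucc, Fin.val_last]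
    have h3 : (t+1) + m - (t+m+1) = 0 := by omega
    rw [h3, pow_zero, mul_one, mul_comm]
  have hpart2 : (∑ g ∈ Finset.univ.filter
        (fun g : Fin (m+1) → Fin (t+m+1) => ∀ a b, a < b → g a < g b),
      ∏ l : Fin (m+1),
        f ((((g l).castSucc : Fin (t+m+1+1))).val + 1)
          ^ ((q - 1) * q ^ ((t+1) + l.val - (((g l).castSucc : Fin (t+m+1+1))).val)))
      = (∑ g ∈ Finset.univ.filter
        (fun g : Fin (m+1) → Fin (t+m+1) => ∀ a b, a < b → g a < g b),
      ∏ l : Fin (m+1), f ((g l).val + 1) ^ ((q - 1) * q ^ (t + l.val - (g l).val))) ^ q := by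
    have hq := qpow_sum (F := F) (n := n) 1
      (Finset.univ.filter
        (fun g : Fin (m+1) → Fin (t+m+1) => ∀ a b, a < b → g a < g b))
      (fun g => ∏ l : Fin (m+1), f ((g l).val + 1) ^ ((q - 1) * q ^ (t + l.val - (g l).val)))
    rw [pow_one] at hq
    rw [hq]
    apply Finset.sum_congr rfl
    intro g hg
    simp only [Finset.mem_filter, Finset.mem_univ, true_and] at hg
    rw [← Finset.prod_pow]
    apply Finset.prod_congr rfl
    intro l _
    simp only [Fin.coe_castSucc]
    rw [← pow_mul]
    congr 1
    have hb := mono_bound hg l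
    have : t + l.val - (g l).val + 1 = (t+1) + l.val - (g l).val := by omega
    rw [mul_assoc, ← pow_succ, this]
  rw [hpart1, hpart2, add_comm]


lemma snoc_equiv_aux (s : ℕ) : True := trivial

noncomputable def snocEquiv (s : ℕ) : ((Fin s → F) × F) ≃ (Fin (s+1) → F) where
  toFun p := Fin.snoc p.1 p.2
  invFun g := (fun l => g l.castSucc, g (Fin.last s))
  left_inv p := by
    ext l
    · simp [Fin.snoc_castSucc]
    · simp [Fin.snoc_last]
  right_inv g := by
    funext l
    rcases Fin.eq_castSucc_or_eq_last l with ⟨l', rfl⟩ | rfl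
    · simp only []
      rw [Fin.snoc_castSucc]
    · simp only []
      rw [Fin.snoc_last]

lemma Piv_succ (v : ℕ → MvPolynomial (Fin n ⊕ Fin n) F) (s : ℕ)
    (z : MvPolynomial (Fin n ⊕ Fin n) F) :
    Piv v (s+1) z = ∏ β : F, Piv v s (z + C β * v s) := by
  unfold Piv
  rw [← Equiv.prod_comp (snocEquiv s)
    (fun α : Fin (s+1) → F => z + ∑ j : Fin (s+1), C (α j) * v j)]
  rw [Fintype.prod_prod_type]
  rw [Finset.prod_comm]
  apply Finset.prod_congr rfl
  intro β _
  apply Finset.prod_congr rfl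
  intro α _
  have hsum : ∑ j : Fin (s+1), C ((snocEquiv s (α, β)) j) * v j
      = (∑ j : Fin s, C (α j) * v j) + C β * v s := by
    rw [Fin.sum_univ_castSucc]
    simp only [snocEquiv, Equiv.coe_fn_mk, Fin.snoc_castSucc, Fin.snoc_last,
      Fin.coe_castSucc, Fin.val_last]
  rw [hsum]
  ring

lemma neg_one_pow_add_two (a : ℕ) : ((-1 : MvPolynomial (Fin n ⊕ Fin n) F))^(a+2) = (-1)^a := by
  rw [pow_add]
  norm_num

lemma neg_one_pow_q (a : ℕ) :
    (((-1 : MvPolynomial (Fin n ⊕ Fin n) F))^a)^q = (-1)^a := by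
  have h := qpow_neg_one (F := F) (n := n) 1
  rw [pow_one] at h
  rw [pow_right_comm, h]

lemma Piv_add_of_formula (v : ℕ → MvPolynomial (Fin n ⊕ Fin n) F) (s : ℕ)
    (h : ∀ z, Piv v s z = ∑ t ∈ Finset.range (s+1),
      (-1)^(s+t) * cc (fun mm => Piv v (mm-1) (v (mm-1))) (s-t) s t * z^(q^t))
    (β : F) (z w : MvPolynomial (Fin n ⊕ Fin n) F) :
    Piv v s (z + C β * w) = Piv v s z + C β * Piv v s w := by
  rw [h (z + C β * w), h z, h w, Finset.mul_sum, ← Finset.sum_add_distrib]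
  apply Finset.sum_congr rfl
  intro t _
  rw [qpow_add t z (C β * w), mul_pow, qpow_C]
  ring

lemma Piv_formula (v : ℕ → MvPolynomial (Fin n ⊕ Fin n) F) :
    ∀ (s : ℕ) (z : MvPolynomial (Fin n ⊕ Fin n) F), Piv v s z
      = ∑ t ∈ Finset.range (s+1),
        (-1)^(s+t) * cc (fun mm => Piv v (mm-1) (v (mm-1))) (s-t) s t * z^(q^t) := by
  intro s
  induction s with
  | zero =>
      intro z
      unfold Piv
      simp only [Finset.range_one, Finset.sum_singleton, Nat.sub_zero, Nat.zero_add, pow_zero,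
        pow_one, cc_zero]
      rw [Finset.prod_congr rfl (fun α _ => by
        rw [show (∑ j : Fin 0, C (α j) * v j) = 0 from Finset.sum_empty, add_zero])]
      rw [Finset.prod_const]
      simp
  | succ s IH =>
      intro z
      set fv : ℕ → MvPolynomial (Fin n ⊕ Fin n) F := fun mm => Piv v (mm-1) (v (mm-1)) with hfv
      set W : MvPolynomial (Fin n ⊕ Fin n) F := Piv v s (v s) with hW
      have hfvs : fv (s+1) = W := by rw [hfv]; simp [hW]
      rw [Piv_succ]
      rw [Finset.prod_congr rfl (fun β _ => Piv_add_of_formula v s IH β z (v s))]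
      rw [prod_linear (Piv v s z) W]
      -- expand (Piv v s z)^q
      have hexp : (Piv v s z)^q = ∑ t ∈ Finset.range (s+1),
          (-1)^(s+t) * (cc fv (s-t) s t)^q * z^(q^(t+1)) := by
        rw [IH z]
        have hq := qpow_sum (F := F) (n := n) 1 (Finset.range (s+1))
          (fun t => (-1)^(s+t) * cc fv (s-t) s t * z^(q^t))
        rw [pow_one] at hq
        rw [hq]
        apply Finset.sum_congr rfl
        intro t _
        rw [mul_pow, mul_pow, neg_one_pow_q, ← pow_mul, ← pow_succ]
      have hlin : W^(q-1) * Piv v s z = ∑ t ∈ Finset.range (s+1),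
          (-1)^(s+t) * (W^(q-1) * cc fv (s-t) s t) * z^(q^t) := by
        rw [IH z, Finset.mul_sum]
        apply Finset.sum_congr rfl
        intro t _
        ring
      rw [hexp, hlin]
      -- abbreviations (as plain functions)
      have hG0 : (-1)^(s+1+0) * cc fv (s+1-0) (s+1) 0 * z^(q^0)
          = -((-1)^(s+0) * (W^(q-1) * cc fv (s-0) s 0) * z^(q^0)) := by
        rw [show s+1-0 = s+1 by omega, cc_succ_zero fv s, hfvs]
        rw [show s-0 = s by omega, show s+0 = s by omega, show s+1+0 = s+1 by omega, pow_succ]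
        ring
      have hsplit : ∑ t ∈ Finset.range (s+1),
            (-1)^(s+1+(t+1)) * cc fv (s+1-(t+1)) (s+1) (t+1) * z^(q^(t+1))
          = ∑ t ∈ Finset.range (s+1), (-1)^(s+t) * (cc fv (s-t) s t)^q * z^(q^(t+1))
            + ∑ t ∈ Finset.range s,
              -((-1)^(s+(t+1)) * (W^(q-1) * cc fv (s-(t+1)) s (t+1)) * z^(q^(t+1))) := by
        calc ∑ t ∈ Finset.range (s+1),
              (-1)^(s+1+(t+1)) * cc fv (s+1-(t+1)) (s+1) (t+1) * z^(q^(t+1))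
            = (∑ t ∈ Finset.range s,
                (-1)^(s+1+(t+1)) * cc fv (s+1-(t+1)) (s+1) (t+1) * z^(q^(t+1)))
              + (-1)^(s+1+(s+1)) * cc fv (s+1-(s+1)) (s+1) (s+1) * z^(q^(s+1)) :=
              Finset.sum_range_succ _ s
          _ = (∑ t ∈ Finset.range s,
                ((-1)^(s+t) * (cc fv (s-t) s t)^q * z^(q^(t+1))
                  + -((-1)^(s+(t+1)) * (W^(q-1) * cc fv (s-(t+1)) s (t+1)) * z^(q^(t+1)))))
              + (-1)^(s+s) * (cc fv (s-s) s s)^q * z^(q^(s+1)) := by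
              congr 1
              · apply Finset.sum_congr rfl
                intro t ht
                rw [Finset.mem_range] at ht
                have hm : s - t = (s - t - 1) + 1 := by omega
                have hrec := cc_succ_succ fv (s-t-1) t
                rw [show t+(s-t-1)+2 = s+1 by omega, show t+(s-t-1)+1 = s by omega, ← hm] at hrec
                rw [show s+1-(t+1) = s-t by omega, hrec, hfvs]
                rw [show s - t - 1 = s - (t+1) by omega]
                rw [show s+1+(t+1) = (s+t)+2 by omega, neg_one_pow_add_two,
                  show s+(t+1) = (s+t)+1 by omega, pow_succ]
                ring
              · rw [show s+1-(s+1) = 0 by omega, show s-s = 0 by omega, cc_zero, cc_zero]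
                rw [show s+1+(s+1) = (s+s)+2 by omega, neg_one_pow_add_two]
                simp
          _ = ((∑ t ∈ Finset.range s, (-1)^(s+t) * (cc fv (s-t) s t)^q * z^(q^(t+1)))
                + (-1)^(s+s) * (cc fv (s-s) s s)^q * z^(q^(s+1)))
              + ∑ t ∈ Finset.range s,
                -((-1)^(s+(t+1)) * (W^(q-1) * cc fv (s-(t+1)) s (t+1)) * z^(q^(t+1))) := by
              rw [Finset.sum_add_distrib]
              ring
          _ = _ := by rw [← Finset.sum_range_succ]
      rw [Finset.sum_range_succ' (fun t =>
        (-1)^(s+1+t) * cc fv (s+1-t) (s+1) t * z^(q^t)) (s+1)]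
      rw [Finset.sum_range_succ' (fun t =>
        (-1)^(s+t) * (W^(q-1) * cc fv (s-t) s t) * z^(q^t)) s]
      rw [hsplit, hG0]
      have hneg : ∑ t ∈ Finset.range s,
            -((-1)^(s+(t+1)) * (W^(q-1) * cc fv (s-(t+1)) s (t+1)) * z^(q^(t+1)))
          = -∑ t ∈ Finset.range s,
            (-1)^(s+(t+1)) * (W^(q-1) * cc fv (s-(t+1)) s (t+1)) * z^(q^(t+1)) := by
        rw [← Finset.sum_neg_distrib]
      rw [hneg]
      ring

noncomputable def vx : ℕ → MvPolynomial (Fin n ⊕ Fin n) F := fun j =>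
  if h : j < n then X (Sum.inl ⟨j, h⟩) else 0

noncomputable def vy : ℕ → MvPolynomial (Fin n ⊕ Fin n) F := fun j =>
  if h : j < n then X (Sum.inr ⟨n - 1 - j, by omega⟩) else 0

lemma fX_eq (k : ℕ) (h1 : 1 ≤ k) (h2 : k ≤ n) :
    fX F n k = Piv (vx (F := F) (n := n)) (k-1) (vx (F := F) (n := n) (k-1)) := by
  unfold fX Piv
  rw [dif_pos ⟨h1, h2⟩]
  apply Finset.prod_congr rfl
  intro α _
  congr 1
  · show _ = vx (F := F) (n := n) (k-1)
    unfold vx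
    rw [dif_pos (show k - 1 < n by omega)]
  · apply Finset.sum_congr rfl
    intro j _
    congr 1
    show _ = vx (F := F) (n := n) j.val
    unfold vx
    rw [dif_pos (show j.val < n by have := j.isLt; omega)]

lemma fY_eq (k : ℕ) (h1 : 1 ≤ k) (h2 : k ≤ n) :
    fY F n k = Piv (vy (F := F) (n := n)) (k-1) (vy (F := F) (n := n) (k-1)) := by
  unfold fY Piv
  rw [dif_pos ⟨h1, h2⟩]
  apply Finset.prod_congr rfl
  intro α _
  congr 1
  · show _ = vy (F := F) (n := n) (k-1)
    unfold vy
    rw [dif_pos (show k - 1 < n by omega)]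
    congr 1
    apply congrArg
    apply Fin.ext
    show n - k = n - 1 - (k - 1)
    omega
  · apply Finset.sum_congr rfl
    intro j _
    congr 1
    show _ = vy (F := F) (n := n) j.val
    unfold vy
    rw [dif_pos (show j.val < n by have := j.isLt; omega)]

lemma cX_eq (s t : ℕ) (hs : s ≤ n) :
    cX F n s t
      = cc (fun mm => Piv (vx (F := F) (n := n)) (mm-1) (vx (F := F) (n := n) (mm-1))) (s-t) s t := by
  unfold cX cc
  rw [if_pos hs]
  apply Finset.sum_congr rfl
  intro g hg
  apply Finset.prod_congr rfl
  intro l _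
  congr 1
  rw [fX_eq ((g l).val + 1) (by omega) (by have := (g l).isLt; omega)]

lemma cY_eq (s t : ℕ) (hs : s ≤ n) :
    cY F n s t
      = cc (fun mm => Piv (vy (F := F) (n := n)) (mm-1) (vy (F := F) (n := n) (mm-1))) (s-t) s t := by
  unfold cY cc
  rw [if_pos hs]
  apply Finset.sum_congr rfl
  intro g hg
  apply Finset.prod_congr rfl
  intro l _
  congr 1
  rw [fY_eq ((g l).val + 1) (by omega) (by have := (g l).isLt; omega)]

lemma u_pow (i j : ℕ) : uInv F n ((i : ℤ) - (j : ℤ)) ^ (q ^ min i j)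
    = ∑ l : Fin n, X (Sum.inl l) ^ (q^i) * X (Sum.inr l) ^ (q^j) := by
  unfold uInv
  rcases le_or_gt j i with h | h
  · rw [if_pos (by omega : (0:ℤ) ≤ (i:ℤ) - (j:ℤ)), min_eq_right h]
    rw [qpow_sum]
    apply Finset.sum_congr rfl
    intro l _
    rw [mul_pow, ← pow_mul, ← pow_add]
    have h1 : ((i:ℤ) - (j:ℤ)).toNat = i - j := by omega
    rw [h1, show i - j + j = i by omega]
  · rw [if_neg (by omega : ¬ (0:ℤ) ≤ (i:ℤ) - (j:ℤ)), min_eq_left (le_of_lt h)]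
    rw [qpow_sum]
    apply Finset.sum_congr rfl
    intro l _
    rw [mul_pow, ← pow_mul (X (Sum.inr l)), ← pow_add]
    have h1 : (-((i:ℤ) - (j:ℤ))).toNat = j - i := by omega
    rw [h1, show j - i + i = j by omega]

lemma Piv_root (v : ℕ → MvPolynomial (Fin n ⊕ Fin n) F) (s : ℕ) (j : ℕ) (hj : j < s) :
    Piv v s (v j) = 0 := by
  unfold Piv
  apply Finset.prod_eq_zero
    (Finset.mem_univ (fun i : Fin s => if i.val = j then (-1 : F) else 0))
  have hsum : ∑ i : Fin s, C (if i.val = j then (-1 : F) else 0) * v i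
      = - v j := by
    rw [Finset.sum_eq_single (⟨j, hj⟩ : Fin s)]
    · simp
    · intro i _ hne
      have : ¬ i.val = j := by
        intro hc
        exact hne (Fin.ext hc)
      simp [this]
    · intro hc
      exact absurd (Finset.mem_univ _) hc
  rw [hsum]
  ring

lemma neg_one_cancel (a b : ℕ) :
    ((-1 : MvPolynomial (Fin n ⊕ Fin n) F))^a * (-1)^(a+b) = ((-1 : MvPolynomial (Fin n ⊕ Fin n) F))^b := by
  rw [← pow_add, show a+(a+b) = b+2*a by ring, pow_add, pow_mul, neg_one_sq, one_pow, mul_one]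

end RkAux

open RkAux in
/-- Relation `R_k`. -/
theorem relation_Rk (k : ℕ) (hk1 : 1 ≤ k) (hk2 : k ≤ n) :
    ∑ i ∈ Finset.range k, ∑ j ∈ Finset.range (n - k + 1),
      (-1 : MvPolynomial (Fin n ⊕ Fin n) F) ^ (i + j + n + 1) *
        cX F n (k - 1) i * cY F n (n - k) j *
        uInv F n ((i : ℤ) - (j : ℤ)) ^ (Fintype.card F ^ min i j)
    = fX F n k * fY F n (n + 1 - k) := by
  classical
  obtain ⟨sx, rfl⟩ : ∃ m, k = m + 1 := ⟨k - 1, by omega⟩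
  simp only [Nat.add_sub_cancel]
  set FVX : ℕ → MvPolynomial (Fin n ⊕ Fin n) F :=
    fun mm => Piv (vx (F := F) (n := n)) (mm-1) (vx (F := F) (n := n) (mm-1)) with hFVX
  set FVY : ℕ → MvPolynomial (Fin n ⊕ Fin n) F :=
    fun mm => Piv (vy (F := F) (n := n)) (mm-1) (vy (F := F) (n := n) (mm-1)) with hFVY
  calc
    ∑ i ∈ Finset.range (sx+1), ∑ j ∈ Finset.range (n - (sx+1) + 1),
      (-1 : MvPolynomial (Fin n ⊕ Fin n) F) ^ (i + j + n + 1) *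
        cX F n sx i * cY F n (n - (sx+1)) j *
        uInv F n ((i : ℤ) - (j : ℤ)) ^ (Fintype.card F ^ min i j)
      = ∑ i ∈ Finset.range (sx+1), ∑ j ∈ Finset.range (n - (sx+1) + 1), ∑ l : Fin n,
        ((-1 : MvPolynomial (Fin n ⊕ Fin n) F)^(n+1)
          * ((-1)^i * cc FVX (sx-i) sx i * X (Sum.inl l)^(Fintype.card F^i))
          * ((-1)^j * cc FVY ((n-(sx+1))-j) (n-(sx+1)) j * X (Sum.inr l)^(Fintype.card F^j))) := by
        apply Finset.sum_congr rfl
        intro i _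
        apply Finset.sum_congr rfl
        intro j _
        rw [cX_eq sx i (by omega), cY_eq (n-(sx+1)) j (by omega), u_pow i j]
        rw [← hFVX, ← hFVY, Finset.mul_sum]
        apply Finset.sum_congr rfl
        intro l _
        rw [show i+j+n+1 = ((n+1)+i)+j by ring, pow_add, pow_add]
        ring
    _ = ∑ l : Fin n, ∑ i ∈ Finset.range (sx+1), ∑ j ∈ Finset.range (n - (sx+1) + 1),
        ((-1 : MvPolynomial (Fin n ⊕ Fin n) F)^(n+1)
          * ((-1)^i * cc FVX (sx-i) sx i * X (Sum.inl l)^(Fintype.card F^i))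
          * ((-1)^j * cc FVY ((n-(sx+1))-j) (n-(sx+1)) j * X (Sum.inr l)^(Fintype.card F^j))) := by
        rw [Finset.sum_congr rfl (fun i (_ : i ∈ Finset.range (sx+1)) => Finset.sum_comm)]
        exact Finset.sum_comm
    _ = ∑ l : Fin n, ((-1 : MvPolynomial (Fin n ⊕ Fin n) F)^(n+1)
          * (∑ i ∈ Finset.range (sx+1),
              (-1)^i * cc FVX (sx-i) sx i * X (Sum.inl l)^(Fintype.card F^i))
          * (∑ j ∈ Finset.range (n - (sx+1) + 1),
              (-1)^j * cc FVY ((n-(sx+1))-j) (n-(sx+1)) j * X (Sum.inr l)^(Fintype.card F^j))) := by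
        apply Finset.sum_congr rfl
        intro l _
        rw [mul_assoc, Finset.sum_mul_sum, Finset.mul_sum]
        apply Finset.sum_congr rfl
        intro i _
        rw [Finset.mul_sum]
        apply Finset.sum_congr rfl
        intro j _
        ring
    _ = ∑ l : Fin n, Piv (vx (F := F) (n := n)) sx (X (Sum.inl l))
          * Piv (vy (F := F) (n := n)) (n-(sx+1)) (X (Sum.inr l)) := by
        apply Finset.sum_congr rfl
        intro l _
        have hxl : (∑ i ∈ Finset.range (sx+1),
              ((-1 : MvPolynomial (Fin n ⊕ Fin n) F))^i * cc FVX (sx-i) sx i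
                * X (Sum.inl l)^(Fintype.card F^i))
            = (-1 : MvPolynomial (Fin n ⊕ Fin n) F)^sx
                * Piv (vx (F := F) (n := n)) sx (X (Sum.inl l)) := by
          rw [Piv_formula (vx (F := F) (n := n)) sx (X (Sum.inl l)), ← hFVX, Finset.mul_sum]
          apply Finset.sum_congr rfl
          intro i _
          rw [show ((-1 : MvPolynomial (Fin n ⊕ Fin n) F))^sx
              * ((-1)^(sx+i) * cc FVX (sx-i) sx i * X (Sum.inl l)^(Fintype.card F^i))
              = ((-1 : MvPolynomial (Fin n ⊕ Fin n) F)^sx * (-1)^(sx+i))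
                * (cc FVX (sx-i) sx i * X (Sum.inl l)^(Fintype.card F^i)) by ring,
            neg_one_cancel]
          ring
        have hyl : (∑ j ∈ Finset.range (n-(sx+1)+1),
              ((-1 : MvPolynomial (Fin n ⊕ Fin n) F))^j * cc FVY ((n-(sx+1))-j) (n-(sx+1)) j
                * X (Sum.inr l)^(Fintype.card F^j))
            = (-1 : MvPolynomial (Fin n ⊕ Fin n) F)^(n-(sx+1))
                * Piv (vy (F := F) (n := n)) (n-(sx+1)) (X (Sum.inr l)) := by
          rw [Piv_formula (vy (F := F) (n := n)) (n-(sx+1)) (X (Sum.inr l)), ← hFVY,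
            Finset.mul_sum]
          apply Finset.sum_congr rfl
          intro j _
          rw [show ((-1 : MvPolynomial (Fin n ⊕ Fin n) F))^(n-(sx+1))
              * ((-1)^((n-(sx+1))+j) * cc FVY ((n-(sx+1))-j) (n-(sx+1)) j
                  * X (Sum.inr l)^(Fintype.card F^j))
              = ((-1 : MvPolynomial (Fin n ⊕ Fin n) F)^(n-(sx+1)) * (-1)^((n-(sx+1))+j))
                * (cc FVY ((n-(sx+1))-j) (n-(sx+1)) j * X (Sum.inr l)^(Fintype.card F^j)) by ring,
            neg_one_cancel]
          ring
        rw [hxl, hyl]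
        have hone : ((-1 : MvPolynomial (Fin n ⊕ Fin n) F))^(n+1) * ((-1)^sx * (-1)^(n-(sx+1)))
            = 1 := by
          rw [← pow_add, ← pow_add, show (n+1)+(sx+(n-(sx+1))) = 2*n by omega, pow_mul,
            neg_one_sq, one_pow]
        calc ((-1 : MvPolynomial (Fin n ⊕ Fin n) F))^(n+1)
              * ((-1)^sx * Piv (vx (F := F) (n := n)) sx (X (Sum.inl l)))
              * ((-1)^(n-(sx+1)) * Piv (vy (F := F) (n := n)) (n-(sx+1)) (X (Sum.inr l)))
            = ((-1 : MvPolynomial (Fin n ⊕ Fin n) F)^(n+1) * ((-1)^sx * (-1)^(n-(sx+1))))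
              * (Piv (vx (F := F) (n := n)) sx (X (Sum.inl l))
                  * Piv (vy (F := F) (n := n)) (n-(sx+1)) (X (Sum.inr l))) := by ring
          _ = _ := by rw [hone, one_mul]
    _ = fX F n (sx+1) * fY F n (n + 1 - (sx+1)) := by
        rw [Finset.sum_eq_single_of_mem (⟨sx, by omega⟩ : Fin n) (Finset.mem_univ _)]
        · have h1 : vx (F := F) (n := n) sx = X (Sum.inl (⟨sx, by omega⟩ : Fin n)) := by
            unfold vx
            rw [dif_pos (show sx < n by omega)]
          have h2 : vy (F := F) (n := n) (n-(sx+1)) = X (Sum.inr (⟨sx, by omega⟩ : Fin n)) := by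
            unfold vy
            rw [dif_pos (show n-(sx+1) < n by omega)]
            exact congrArg X (congrArg Sum.inr (Fin.ext (by simp; omega)))
          rw [fX_eq (sx+1) (by omega) hk2, fY_eq (n+1-(sx+1)) (by omega) (by omega)]
          rw [show (sx+1)-1 = sx by omega, show (n+1-(sx+1))-1 = n-(sx+1) by omega]
          rw [h1, h2]
        · intro b _ hb
          rcases lt_trichotomy b.val sx with h | h | h
          · have hxb : vx (F := F) (n := n) b.val = X (Sum.inl b) := by
              unfold vx
              rw [dif_pos b.isLt]
            rw [← hxb, Piv_root (vx (F := F) (n := n)) sx b.val h, zero_mul]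
          · exact absurd (Fin.ext h) hb
          · have hyb : vy (F := F) (n := n) (n-1-b.val) = X (Sum.inr b) := by
              unfold vy
              rw [dif_pos (show n-1-b.val < n by have := b.isLt; omega)]
              exact congrArg X (congrArg Sum.inr (Fin.ext (by simp; have := b.isLt; omega)))
            rw [← hyb, Piv_root (vy (F := F) (n := n)) (n-(sx+1)) (n-1-b.val)
              (by have := b.isLt; omega), mul_zero]
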